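/- Let φ : ℂ[X,Y,Z,W] → ℂ[x,y,z] be the ℂ-algebra homomorphism sending X ↦ y²+xz, Y ↦ x⁵+yz+xy², Z ↦ x⁶+y³+z², W ↦ x⁷+x⁴z+xz²+y²z (the components of f₁). Then the Krull dimension of the quotient ring ℂ[X,Y,Z,W]/ker φ equals 3; i.e., the image of f₁ is a three-dimensional variety (a hypersurface) in ℂ⁴. -/

import Mathlib

open MvPolynomial

variable {K : Type*} [Field K]

/-- The set of exponent vectors with every entry `≤ t` is equivalent to `Fin m → Fin (t+1)`. -/
noncomputable def degEquiv (m t : ℕ) :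
    {α : Fin m →₀ ℕ | ∀ i, α i ≤ t} ≃ (Fin m → Fin (t + 1)) where
  toFun a i := ⟨a.1 i, Nat.lt_succ_of_le (a.2 i)⟩
  invFun g := ⟨Finsupp.equivFunOnFinite.symm fun i => (g i : ℕ), fun i => by
    simpa using Nat.lt_succ_iff.mp (g i).2⟩
  left_inv a := by
    ext i
    simp [Finsupp.equivFunOnFinite]
  right_inv g := by
    ext i
    simp

noncomputable instance degFintype (m t : ℕ) :
    Fintype {α : Fin m →₀ ℕ | ∀ i, α i ≤ t} :=
  Fintype.ofEquiv _ (degEquiv m t).symm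

lemma degCard (m t : ℕ) :
    Fintype.card {α : Fin m →₀ ℕ | ∀ i, α i ≤ t} = (t + 1) ^ m := by
  rw [Fintype.card_congr (degEquiv m t)]
  simp [Fintype.card_fun]

lemma finrank_restrictDegree (m t : ℕ) :
    Module.finrank K (restrictDegree (Fin m) K t) = (t + 1) ^ m := by
  rw [restrictDegree, Module.finrank_eq_card_basis (basisRestrictSupport K _),
    Fintype.card_congr (degEquiv m t)]
  simp [Fintype.card_fun]

/-- There is no algebraically independent family of `n+1` polynomials in `n` variables. -/
theorem not_algIndep {n : ℕ} (v : Fin (n + 1) → MvPolynomial (Fin n) K) :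
    ¬ AlgebraicIndependent K v := by
  intro hv
  have hinj : Function.Injective (aeval v : MvPolynomial (Fin (n + 1)) K →ₐ[K] _) :=
    algebraicIndependent_iff_injective_aeval.mp hv
  set D : ℕ := (Finset.univ.sup fun i => (v i).totalDegree) + 1 with hD
  set E : ℕ := (n + 1) * D + 1 with hE
  set t : ℕ := E ^ n with ht
  set M : ℕ := (n + 1) * t * D with hM
  set S : Set (Fin (n + 1) →₀ ℕ) := {α | ∀ i, α i ≤ t} with hS
  -- the monomials in `v` of multidegree in `S` are linearly independent
  have hmono : LinearIndependent K
      (fun α : S => (monomial (α : Fin (n + 1) →₀ ℕ) (1 : K) : MvPolynomial (Fin (n + 1)) K)) := by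
    have := (basisMonomials (Fin (n + 1)) K).linearIndependent.comp
      (fun α : S => (α : Fin (n + 1) →₀ ℕ)) Subtype.val_injective
    exact this
  have hli : LinearIndependent K
      (fun α : S => aeval v (monomial (α : Fin (n + 1) →₀ ℕ) (1 : K))) := by
    have := hmono.map' (aeval v).toLinearMap
      (LinearMap.ker_eq_bot.mpr (by exact hinj))
    exact this
  -- these vectors all lie in the space of polynomials of total degree ≤ M
  have hmem : ∀ α : S, aeval v (monomial (α : Fin (n + 1) →₀ ℕ) (1 : K))
      ∈ restrictTotalDegree (Fin n) K M := by
    intro α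
    rw [mem_restrictTotalDegree, aeval_monomial, map_one, one_mul]
    calc ((α : Fin (n + 1) →₀ ℕ).prod fun i k => v i ^ k).totalDegree
        ≤ ∑ i ∈ (α : Fin (n + 1) →₀ ℕ).support, (v i ^ (α : Fin (n + 1) →₀ ℕ) i).totalDegree :=
          totalDegree_finset_prod _ _
      _ ≤ ∑ i ∈ (Finset.univ : Finset (Fin (n + 1))), (v i ^ (α : Fin (n + 1) →₀ ℕ) i).totalDegree :=
          Finset.sum_le_sum_of_subset_of_nonneg (Finset.subset_univ _)
            (fun _ _ _ => Nat.zero_le _)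
      _ ≤ ∑ _i ∈ (Finset.univ : Finset (Fin (n + 1))), t * D := by
          refine Finset.sum_le_sum fun i _ => ?_
          refine (totalDegree_pow _ _).trans ?_
          have h1 : (α : Fin (n + 1) →₀ ℕ) i ≤ t := α.2 i
          have h2 : (v i).totalDegree ≤ D := by
            have := Finset.le_sup (f := fun i => (v i).totalDegree) (Finset.mem_univ i)
            rw [hD]
            exact Nat.le_succ_of_le this
          exact Nat.mul_le_mul h1 h2
      _ = (n + 1) * (t * D) := by simp [Finset.sum_const, mul_comm]
      _ = M := by rw [hM, mul_assoc]
  -- linear independence inside the finite-dimensional subspace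
  set V := restrictTotalDegree (Fin n) K M with hV
  have hli' : LinearIndependent K
      (fun α : S => (⟨aeval v (monomial (α : Fin (n + 1) →₀ ℕ) (1 : K)), hmem α⟩ : V)) := by
    apply LinearIndependent.of_comp V.subtype
    exact hli
  have hcard : Fintype.card S ≤ Module.finrank K V :=
    hli'.fintype_card_le_finrank
  have hVle : Module.finrank K V ≤ (M + 1) ^ n := by
    rw [← finrank_restrictDegree (K := K) n M]
    exact Submodule.finrank_mono (restrictTotalDegree_le_restrictDegree _ _ _)
  rw [show Fintype.card S = (t + 1) ^ (n + 1) from degCard (n + 1) t] at hcard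
  -- arithmetic contradiction
  have hE1 : 1 ≤ E := Nat.le_add_left 1 _
  have ht1 : 1 ≤ t := Nat.one_le_pow _ _ hE1
  have harith : (M + 1) ^ n < (t + 1) ^ (n + 1) := by
    have h1 : M + 1 ≤ E * (t + 1) := by
      have : (n + 1) * t * D ≤ (n + 1) * D * t := by ring_nf; omega
      calc M + 1 ≤ (n + 1) * D * t + 1 := by omega
        _ ≤ E * (t + 1) := by rw [hE]; ring_nf; omega
    calc (M + 1) ^ n ≤ (E * (t + 1)) ^ n := Nat.pow_le_pow_left h1 n
      _ = t * (t + 1) ^ n := by rw [mul_pow, ← ht]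
      _ < (t + 1) * (t + 1) ^ n :=
          mul_lt_mul_of_pos_right (Nat.lt_succ_self t) (Nat.pow_pos (n := n) (Nat.succ_pos t))
      _ = (t + 1) ^ (n + 1) := by ring
  omega

section Chain

variable {B : Type*} [CommRing B] [Algebra K B]

/-- Inner induction: a polynomial whose `eval₂` at `f` lands in `p` is zero. -/
lemma eval₂_inner {C : Type*} [CommRing C] (g : C →+* B) (p q : Ideal B) [hp : p.IsPrime]
    (hpq : p ≤ q) (f : B) (hfq : f ∈ q) (hfp : f ∉ p)
    (hg : ∀ c : C, g c ∈ q → c = 0) :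
    ∀ (N : ℕ) (Q : Polynomial C), Q.natDegree ≤ N → Q.eval₂ g f ∈ p → Q = 0 := by
  intro N
  induction N with
  | zero =>
    intro Q hdeg hmem
    have hQ : Q = Polynomial.C (Q.coeff 0) := Polynomial.eq_C_of_natDegree_le_zero hdeg
    rw [hQ, Polynomial.eval₂_C] at hmem
    rw [hQ, hg _ (hpq hmem), map_zero]
  | succ N ih =>
    intro Q hdeg hmem
    have hsplit : Q.divX * Polynomial.X + Polynomial.C (Q.coeff 0) = Q :=
      Polynomial.divX_mul_X_add Q
    have heval : Q.eval₂ g f = Q.divX.eval₂ g f * f + g (Q.coeff 0) := by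
      conv_lhs => rw [← hsplit]
      simp [Polynomial.eval₂_add, Polynomial.eval₂_mul]
    have hc0 : g (Q.coeff 0) ∈ q := by
      have h1 : Q.divX.eval₂ g f * f ∈ q := q.mul_mem_left _ hfq
      have h2 : Q.eval₂ g f ∈ q := hpq hmem
      have := q.sub_mem h2 h1
      rw [heval] at this
      simpa using this
    have hc0' : Q.coeff 0 = 0 := hg _ hc0
    have hdivmem : Q.divX.eval₂ g f * f ∈ p := by
      have : Q.eval₂ g f = Q.divX.eval₂ g f * f := by
        rw [heval, hc0', map_zero, add_zero]
      rwa [this] at hmem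
    have hdiv : Q.divX.eval₂ g f ∈ p := by
      rcases hp.mem_or_mem hdivmem with h | h
      · exact h
      · exact absurd h hfp
    have hdivdeg : Q.divX.natDegree ≤ N := by
      have := Polynomial.natDegree_divX_eq_natDegree_tsub_one (p := Q)
      omega
    have := ih Q.divX hdivdeg hdiv
    rw [← hsplit, this, hc0']
    simp
  
/-- evaluation of a multivariate polynomial via `Fin.cons` equals `eval₂` of `finSuccEquiv`. -/
lemma aeval_cons_eq {m : ℕ} (f : B) (y : Fin m → B) (P : MvPolynomial (Fin (m + 1)) K) :
    aeval (Fin.cons f y) P =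
      Polynomial.eval₂ ((aeval y : MvPolynomial (Fin m) K →ₐ[K] B) : MvPolynomial (Fin m) K →+* B)
        f (finSuccEquiv K m P) := by
  induction P using MvPolynomial.induction_on with
  | C a =>
    have : (finSuccEquiv K m) (C a) = Polynomial.C (C a) := by
      simp [finSuccEquiv_apply]
    rw [this]
    simp
  | add p q hp hq => simp [map_add, hp, hq]
  | mul_X p i hp =>
    rw [map_mul, map_mul, Polynomial.eval₂_mul, hp]
    congr 1
    refine Fin.cases ?_ ?_ i
    · simp [finSuccEquiv_X_zero]
    · intro j
      simp [finSuccEquiv_X_succ]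

/-- Key lifting lemma. -/
lemma key_lift {m : ℕ} (p q : Ideal B) [p.IsPrime] (hpq : p ≤ q) (f : B) (hfq : f ∈ q)
    (hfp : f ∉ p) (y : Fin m → B)
    (hy : ∀ P : MvPolynomial (Fin m) K, aeval y P ∈ q → P = 0) :
    ∀ P : MvPolynomial (Fin (m + 1)) K, aeval (Fin.cons f y) P ∈ p → P = 0 := by
  intro P hP
  rw [aeval_cons_eq] at hP
  have := eval₂_inner _ p q hpq f hfq hfp hy (finSuccEquiv K m P).natDegree
    (finSuccEquiv K m P) le_rfl hP
  have h0 : finSuccEquiv K m P = finSuccEquiv K m 0 := by rw [this, map_zero]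
  exact (finSuccEquiv K m).injective h0

/-- A chain of primes of length `k` gives `k` elements whose `aeval` avoids the bottom prime. -/
lemma chain_indep : ∀ (k : ℕ) (c : Fin (k + 1) → Ideal B), (∀ i, (c i).IsPrime) →
    (∀ i : Fin k, c i.castSucc < c i.succ) →
    ∃ y : Fin k → B, ∀ P : MvPolynomial (Fin k) K, aeval y P ∈ c 0 → P = 0 := by
  intro k
  induction k with
  | zero =>
    intro c hprime _
    refine ⟨Fin.elim0, fun P hP => ?_⟩
    obtain ⟨a, rfl⟩ := MvPolynomial.C_surjective (Fin 0) P
    have hane : a = 0 := by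
      by_contra ha
      have : (1 : B) ∈ c 0 := by
        have h1 : algebraMap K B a ∈ c 0 := by simpa using hP
        have h2 : algebraMap K B a⁻¹ * algebraMap K B a ∈ c 0 := (c 0).mul_mem_left _ h1
        rwa [← map_mul, inv_mul_cancel₀ ha, map_one] at h2
      exact (hprime 0).ne_top ((Ideal.eq_top_iff_one _).mpr this)
    rw [hane, map_zero]
  | succ k ih =>
    intro c hprime hstep
    obtain ⟨y, hy⟩ := ih (fun i => c i.succ) (fun i => hprime i.succ)
      (fun i => by simpa only [Fin.succ_castSucc] using hstep i.succ)
    have h01 : c 0 < c 1 := by simpa using hstep 0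
    obtain ⟨f, hfq, hfp⟩ := SetLike.exists_of_lt h01
    haveI : (c 0).IsPrime := hprime 0
    refine ⟨Fin.cons f y, ?_⟩
    exact key_lift (c 0) (c 1) h01.le f hfq hfp y (by simpa using hy)

end Chain

/-- The pullback homomorphism `φ = f₁* : ℂ[X,Y,Z,W] → ℂ[x,y,z]` of the map-germ
`f₁(x,y,z) = (y²+xz, x⁵+yz+xy², x⁶+y³+z², x⁷+x⁴z+xz²+y²z)`
(with `x = X 0`, `y = X 1`, `z = X 2` in the source ring). -/
noncomputable def φ : MvPolynomial (Fin 4) ℂ →ₐ[ℂ] MvPolynomial (Fin 3) ℂ :=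
  aeval
    ![X 1 ^ 2 + X 0 * X 2,
      X 0 ^ 5 + X 1 * X 2 + X 0 * X 1 ^ 2,
      X 0 ^ 6 + X 1 ^ 3 + X 2 ^ 2,
      X 0 ^ 7 + X 0 ^ 4 * X 2 + X 0 * X 2 ^ 2 + X 1 ^ 2 * X 2]


lemma ker_ne_bot : RingHom.ker φ ≠ ⊥ := by
  intro h
  have hinj : Function.Injective ⇑φ := (RingHom.injective_iff_ker_eq_bot φ).mpr h
  exact not_algIndep (n := 3) _ (algebraicIndependent_iff_injective_aeval.mpr hinj)

theorem upper_bound :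
    ringKrullDim (MvPolynomial (Fin 4) ℂ ⧸ RingHom.ker φ) ≤ 3 := by
  show Order.krullDim _ ≤ 3
  rw [Order.krullDim]
  refine iSup_le fun p => ?_
  suffices h : p.length ≤ 3 by exact_mod_cast h
  by_contra hlen
  push_neg at hlen
  -- build the chain of primes in ℂ[X,Y,Z,W]
  set π := Ideal.Quotient.mk (RingHom.ker φ) with hπ
  set c : Fin (p.length + 2) → Ideal (MvPolynomial (Fin 4) ℂ) :=
    Fin.cons ⊥ (fun i => Ideal.comap π (p.toFun i).asIdeal) with hc
  have hprime : ∀ i, (c i).IsPrime := by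
    refine Fin.cases ?_ ?_
    · rw [hc, Fin.cons_zero]; exact Ideal.bot_prime
    · intro j
      rw [hc, Fin.cons_succ]
      exact Ideal.IsPrime.comap _
  have hstep : ∀ i : Fin (p.length + 1), c i.castSucc < c i.succ := by
    refine Fin.cases ?_ ?_
    · rw [show (0 : Fin (p.length + 1)).castSucc = 0 from rfl, hc, Fin.cons_zero,
        show (0 : Fin (p.length + 1)).succ = (0 : Fin p.length.succ).succ from rfl, Fin.cons_succ]
      refine bot_lt_iff_ne_bot.mpr fun hbot => ?_
      apply ker_ne_bot
      have hle : RingHom.ker φ ≤ Ideal.comap π (p.toFun 0).asIdeal := by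
        intro a ha
        rw [Ideal.mem_comap, hπ, Ideal.Quotient.eq_zero_iff_mem.mpr ha]
        exact (p.toFun 0).asIdeal.zero_mem
      rw [hbot] at hle
      exact le_bot_iff.mp hle
    · intro j
      rw [hc, ← Fin.succ_castSucc, Fin.cons_succ, Fin.cons_succ]
      have hlt : (p.toFun j.castSucc).asIdeal < (p.toFun j.succ).asIdeal :=
        (PrimeSpectrum.asIdeal_lt_asIdeal _ _).mpr (p.step j)
      refine lt_of_le_of_ne (Ideal.comap_mono hlt.le) fun heq => ?_
      exact hlt.ne (Ideal.comap_injective_of_surjective π Ideal.Quotient.mk_surjective heq)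
  obtain ⟨y, hy⟩ := chain_indep (K := ℂ) (p.length + 1) c hprime hstep
  have hAI : AlgebraicIndependent ℂ y := by
    rw [algebraicIndependent_iff]
    intro P hP
    exact hy P (by rw [hc, Fin.cons_zero]; simpa using hP)
  have h5 : (5 : ℕ) ≤ p.length + 1 := by omega
  have : AlgebraicIndependent ℂ (y ∘ Fin.castLE h5) :=
    hAI.comp (Fin.castLE h5) (Fin.castLE_injective h5)
  exact not_algIndep (n := 4) _ this

noncomputable def ψ : MvPolynomial (Fin 4) ℂ ⧸ RingHom.ker φ →+* MvPolynomial (Fin 3) ℂ :=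
  Ideal.Quotient.lift (RingHom.ker φ) φ.toRingHom (fun _ ha => ha)

lemma ψ_mk (a : MvPolynomial (Fin 4) ℂ) :
    ψ (Ideal.Quotient.mk (RingHom.ker φ) a) = φ a :=
  rfl

/-- kill x -/
noncomputable def ρ₁ : MvPolynomial (Fin 3) ℂ →ₐ[ℂ] MvPolynomial (Fin 3) ℂ :=
  aeval ![0, X 1, X 2]

/-- kill x, y -/
noncomputable def ρ₂ : MvPolynomial (Fin 3) ℂ →ₐ[ℂ] MvPolynomial (Fin 3) ℂ :=
  aeval ![0, 0, X 2]

/-- kill x, y, z -/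
noncomputable def ρ₃ : MvPolynomial (Fin 3) ℂ →ₐ[ℂ] ℂ :=
  aeval ![0, 0, 0]

lemma ρ₂_of_ρ₁ (b : MvPolynomial (Fin 3) ℂ) (hb : ρ₁ b = 0) : ρ₂ b = 0 := by
  have hcomp : ρ₂ = (aeval (R := ℂ) ![X 0, 0, X 2]).comp ρ₁ := by
    apply MvPolynomial.algHom_ext
    intro i
    fin_cases i <;> simp [ρ₁, ρ₂]
  rw [hcomp]
  simp [hb]

lemma ρ₃_of_ρ₂ (b : MvPolynomial (Fin 3) ℂ) (hb : ρ₂ b = 0) : ρ₃ b = 0 := by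
  have hcomp : ρ₃ = (aeval (R := ℂ) ![0, 0, 0]).comp ρ₂ := by
    apply MvPolynomial.algHom_ext
    intro i
    fin_cases i <;> simp [ρ₂, ρ₃]
  rw [hcomp]
  simp [hb]

theorem lower_bound :
    3 ≤ ringKrullDim (MvPolynomial (Fin 4) ℂ ⧸ RingHom.ker φ) := by
  set Q := MvPolynomial (Fin 4) ℂ ⧸ RingHom.ker φ
  letI : CommRing Q := inferInstance
  -- the four primes
  let q0 : Ideal Q := RingHom.ker ψ
  let q1 : Ideal Q := RingHom.ker (ρ₁.toRingHom.comp ψ)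
  let q2 : Ideal Q := RingHom.ker (ρ₂.toRingHom.comp ψ)
  let q3 : Ideal Q := RingHom.ker (ρ₃.toRingHom.comp ψ)
  haveI h0 : q0.IsPrime := RingHom.ker_isPrime _
  haveI h1 : q1.IsPrime := RingHom.ker_isPrime _
  haveI h2 : q2.IsPrime := RingHom.ker_isPrime _
  haveI h3 : q3.IsPrime := RingHom.ker_isPrime _
  let s0 : PrimeSpectrum Q := ⟨q0, h0⟩
  let s1 : PrimeSpectrum Q := ⟨q1, h1⟩
  let s2 : PrimeSpectrum Q := ⟨q2, h2⟩
  let s3 : PrimeSpectrum Q := ⟨q3, h3⟩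
  -- strict inclusions
  have hlt01 : s0 < s1 := by
    rw [← PrimeSpectrum.asIdeal_lt_asIdeal]
    rw [SetLike.lt_iff_le_and_exists]
    constructor
    · intro a ha
      change ψ a = 0 at ha; change ρ₁ (ψ a) = 0
      rw [ha, map_zero]
    · refine ⟨Ideal.Quotient.mk _ (X 3 ^ 2 - X 0 * X 1 ^ 2), ?_, ?_⟩
      · show ρ₁ (ψ _) = 0
        rw [ψ_mk]
        simp only [φ, ρ₁, map_sub, map_mul, map_pow, aeval_X]
        simp only [Matrix.cons_val_zero, Matrix.cons_val_one, Matrix.head_cons,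
          Matrix.cons_val_two, Matrix.tail_cons, Matrix.cons_val_three, Matrix.head_fin_const]
        simp only [map_add, map_mul, map_pow, aeval_X, Matrix.cons_val_zero, Matrix.cons_val_one,
          Matrix.head_cons, Matrix.cons_val_two, Matrix.tail_cons]
        ring
      · show ¬ (ψ _ = 0)
        rw [ψ_mk]
        intro hzero
        have := congrArg (aeval (fun _ : Fin 3 => (1 : ℂ))) hzero
        simp only [φ, map_sub, map_mul, map_pow, aeval_X, map_add, map_zero,
          Matrix.cons_val_zero, Matrix.cons_val_one, Matrix.head_cons,
          Matrix.cons_val_two, Matrix.tail_cons, Matrix.cons_val_three,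
          Matrix.head_fin_const] at this
        norm_num at this
  have hlt12 : s1 < s2 := by
    rw [← PrimeSpectrum.asIdeal_lt_asIdeal, SetLike.lt_iff_le_and_exists]
    constructor
    · intro a ha
      show ρ₂ (ψ a) = 0
      exact ρ₂_of_ρ₁ _ ha
    · refine ⟨Ideal.Quotient.mk _ (X 0), ?_, ?_⟩
      · show ρ₂ (ψ _) = 0
        rw [ψ_mk]
        simp only [φ, ρ₂, map_add, map_mul, map_pow, aeval_X, Matrix.cons_val_zero,
          Matrix.cons_val_one, Matrix.head_cons, Matrix.cons_val_two, Matrix.tail_cons]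
        ring
      · show ¬ (ρ₁ (ψ _) = 0)
        rw [ψ_mk]
        intro hzero
        have := congrArg (aeval (fun _ : Fin 3 => (1 : ℂ))) hzero
        simp only [φ, ρ₁, map_add, map_mul, map_pow, aeval_X, map_zero, Matrix.cons_val_zero,
          Matrix.cons_val_one, Matrix.head_cons, Matrix.cons_val_two, Matrix.tail_cons] at this
        norm_num at this
  have hlt23 : s2 < s3 := by
    rw [← PrimeSpectrum.asIdeal_lt_asIdeal, SetLike.lt_iff_le_and_exists]
    constructor
    · intro a ha
      show ρ₃ (ψ a) = 0
      exact ρ₃_of_ρ₂ _ ha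
    · refine ⟨Ideal.Quotient.mk _ (X 2), ?_, ?_⟩
      · show ρ₃ (ψ _) = 0
        rw [ψ_mk]
        simp only [φ, ρ₃, map_add, map_mul, map_pow, aeval_X, Matrix.cons_val_zero,
          Matrix.cons_val_one, Matrix.head_cons, Matrix.cons_val_two, Matrix.tail_cons]
        ring
      · show ¬ (ρ₂ (ψ _) = 0)
        rw [ψ_mk]
        intro hzero
        have := congrArg (aeval (fun _ : Fin 3 => (1 : ℂ))) hzero
        simp only [φ, ρ₂, map_add, map_mul, map_pow, aeval_X, map_zero, Matrix.cons_val_zero,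
          Matrix.cons_val_one, Matrix.head_cons, Matrix.cons_val_two, Matrix.tail_cons] at this
        norm_num at this
  let ch : LTSeries (PrimeSpectrum Q) :=
    ⟨3, ![s0, s1, s2, s3], by
      intro i
      fin_cases i
      · exact hlt01
      · exact hlt12
      · exact hlt23⟩
  have hlen := Order.LTSeries.length_le_krullDim ch
  show (3 : WithBot ℕ∞) ≤ Order.krullDim (PrimeSpectrum Q)
  exact_mod_cast hlen

/-- the Krull dimension of `ℂ[X,Y,Z,W]/ker φ` equals `3`; i.e. the image of
`f₁` is a three-dimensional variety (a hypersurface) in `ℂ⁴`. -/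
theorem image_f1_dim_three :
    ringKrullDim (MvPolynomial (Fin 4) ℂ ⧸ RingHom.ker φ) = 3 := by
  exact le_antisymm upper_bound lower_bound
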